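/- Let A₂, A₃ ∈ ℝ with A₂ ≠ 0 and A₃ ≠ 0. Then the trace-type octupolar potential Φₜ(x₁,x₂,x₃) = A₂x₁²x₂ + A₃x₂²x₃ has no critical point on the equator of the unit sphere: there is no x = (x₁,x₂,0) with x₁²+x₂² = 1 such that ∇Φₜ(x) is a scalar multiple of x. -/

import Mathlib

/-- The trace-type octupolar potential `Φₜ(x) = A₂x₁²x₂ + A₃x₂²x₃`. -/
noncomputable def tracePot (A₂ A₃ : ℝ) (x : EuclideanSpace ℝ (Fin 3)) : ℝ :=
  A₂ * (x 0) ^ 2 * x 1 + A₃ * (x 1) ^ 2 * x 2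

theorem stmt17 (A₂ A₃ : ℝ) (hA₂ : A₂ ≠ 0) (hA₃ : A₃ ≠ 0) :
    ¬ ∃ x₁ x₂ : ℝ, x₁ ^ 2 + x₂ ^ 2 = 1 ∧
      ∃ c : ℝ,
        gradient (tracePot A₂ A₃) ((WithLp.equiv 2 (Fin 3 → ℝ)).symm ![x₁, x₂, 0])
          = c • (WithLp.equiv 2 (Fin 3 → ℝ)).symm ![x₁, x₂, 0] := by
  rintro ⟨x₁, x₂, hsum, c, hgrad⟩
  set p : EuclideanSpace ℝ (Fin 3) := (WithLp.equiv 2 (Fin 3 → ℝ)).symm ![x₁, x₂, 0] with hp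
  have h0 : HasFDerivAt (fun x : EuclideanSpace ℝ (Fin 3) => x 0)
      (EuclideanSpace.proj (0 : Fin 3) : EuclideanSpace ℝ (Fin 3) →L[ℝ] ℝ) p :=
    (EuclideanSpace.proj (0 : Fin 3) : EuclideanSpace ℝ (Fin 3) →L[ℝ] ℝ).hasFDerivAt
  have h1 : HasFDerivAt (fun x : EuclideanSpace ℝ (Fin 3) => x 1)
      (EuclideanSpace.proj (1 : Fin 3) : EuclideanSpace ℝ (Fin 3) →L[ℝ] ℝ) p :=
    (EuclideanSpace.proj (1 : Fin 3) : EuclideanSpace ℝ (Fin 3) →L[ℝ] ℝ).hasFDerivAt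
  have h2 : HasFDerivAt (fun x : EuclideanSpace ℝ (Fin 3) => x 2)
      (EuclideanSpace.proj (2 : Fin 3) : EuclideanSpace ℝ (Fin 3) →L[ℝ] ℝ) p :=
    (EuclideanSpace.proj (2 : Fin 3) : EuclideanSpace ℝ (Fin 3) →L[ℝ] ℝ).hasFDerivAt
  have hfun : tracePot A₂ A₃ = fun x : EuclideanSpace ℝ (Fin 3) =>
      A₂ * (x 0 * x 0) * x 1 + A₃ * (x 1 * x 1) * x 2 := by
    funext x; simp only [tracePot]; ring
  have hf : HasFDerivAt (tracePot A₂ A₃) _ p := hfun ▸ (show HasFDerivAt (fun x : EuclideanSpace ℝ (Fin 3) =>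
      A₂ * (x 0 * x 0) * x 1 + A₃ * (x 1 * x 1) * x 2) _ p from
    ((((h0.mul h0).const_mul A₂).mul h1).add (((h1.mul h1).const_mul A₃).mul h2)))
  have hfd := hf.fderiv
  have key : ∀ v : EuclideanSpace ℝ (Fin 3),
      fderiv ℝ (tracePot A₂ A₃) p v = (inner ℝ (c • p) v : ℝ) := by
    intro v
    have : gradient (tracePot A₂ A₃) p = c • p := hgrad
    rw [gradient] at this
    have := congrArg (InnerProductSpace.toDual ℝ (EuclideanSpace ℝ (Fin 3))) this
    simp at this
    rw [this]
    simp [InnerProductSpace.toDual_apply_apply, real_inner_smul_left, Finset.mul_sum, mul_assoc]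
  have k2 := key (EuclideanSpace.single 2 1)
  rw [hfd] at k2
  simp [hp, EuclideanSpace.single_apply, PiLp.inner_apply, WithLp.equiv_symm_apply, WithLp.ofLp_toLp,
    Fin.sum_univ_three, Matrix.cons_val_zero, Matrix.cons_val_one, Matrix.head_cons] at k2
  have hx₂ : x₂ = 0 := k2.resolve_left hA₃
  have k1 := key (EuclideanSpace.single 1 1)
  rw [hfd] at k1
  simp [hp, hx₂, EuclideanSpace.single_apply, PiLp.inner_apply, WithLp.equiv_symm_apply, WithLp.ofLp_toLp,
    Fin.sum_univ_three, Matrix.cons_val_zero, Matrix.cons_val_one, Matrix.head_cons] at k1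
  rcases k1 with h | h
  · exact hA₂ h
  · rw [hx₂, h] at hsum; norm_num at hsum
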